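/- Let β > 1 and G(z) = exp(exp((log z)/β)) for z ≥ 1. For each sufficiently large real k, let x_k be the unique solution of G'(x_k) = k (G is differentiable and convex for large arguments, so x_k exists and is unique for large k). Then x_k = (log k)^β · (1 + O((log log k)/(log k))) as k → ∞; consequently the Legendre transform satisfies G*(k) ≤ k·x_k ≤ k (log k)^β (1 + O((log log k)/(log k))). -/

import Mathlib

open Real Filter Set

noncomputable def psiAux (β t : ℝ) : ℝ := Real.exp (t/β) + t/β - t - Real.log β

lemma psiAux_hasDeriv (β : ℝ) (t : ℝ) :
    HasDerivAt (psiAux β) (Real.exp (t/β) / β + 1/β - 1) t := by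
  unfold psiAux
  have h1 : HasDerivAt (fun t : ℝ => t / β) (1/β) t := (hasDerivAt_id t).div_const β |>.congr_deriv (by simp)
  have h2 : HasDerivAt (fun t : ℝ => Real.exp (t/β)) (Real.exp (t/β) * (1/β)) t := h1.exp
  have h3 := ((h2.add h1).sub (hasDerivAt_id t)).sub_const (Real.log β)
  refine h3.congr_deriv ?_
  ring

lemma deriv_G_eq (β : ℝ) (hβ : 0 < β) (G : ℝ → ℝ)
    (hG_eq : ∀ z : ℝ, 1 ≤ z → G z = Real.exp (Real.exp (Real.log z / β)))
    (x : ℝ) (hx : 1 < x) :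
    HasDerivAt G (Real.exp (psiAux β (Real.log x))) x := by
  have hx0 : 0 < x := lt_trans one_pos hx
  have h1 : HasDerivAt (fun y : ℝ => Real.log y / β) (x⁻¹ / β) x :=
    (Real.hasDerivAt_log (ne_of_gt hx0)).div_const β
  have h2 : HasDerivAt (fun y : ℝ => Real.exp (Real.log y / β))
      (Real.exp (Real.log x / β) * (x⁻¹ / β)) x := h1.exp
  have h3 : HasDerivAt (fun y : ℝ => Real.exp (Real.exp (Real.log y / β)))
      (Real.exp (Real.exp (Real.log x / β)) * (Real.exp (Real.log x / β) * (x⁻¹ / β))) x := h2.exp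
  have heq : G =ᶠ[nhds x] (fun y : ℝ => Real.exp (Real.exp (Real.log y / β))) := by
    filter_upwards [eventually_gt_nhds hx] with y hy
    exact hG_eq y hy.le
  have h4 := h3.congr_of_eventuallyEq heq
  refine h4.congr_deriv ?_
  have : x⁻¹ = Real.exp (-(Real.log x)) := by
    rw [Real.exp_neg, Real.exp_log hx0]
  rw [psiAux, Real.exp_sub, Real.exp_sub, Real.exp_add, this]
  rw [Real.exp_log hβ, Real.exp_neg]
  ring

lemma psiAux_continuous (β : ℝ) : Continuous (psiAux β) := by
  unfold psiAux; fun_prop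

lemma psiAux_strictMono (β : ℝ) (hβ : 1 < β) (t₀ : ℝ) (ht₀ : β * Real.log β ≤ t₀) :
    StrictMonoOn (psiAux β) (Set.Ici t₀) := by
  have hβ0 : 0 < β := lt_trans one_pos hβ
  apply strictMonoOn_of_deriv_pos (convex_Ici t₀) ((psiAux_continuous β).continuousOn)
  intro u hu
  rw [interior_Ici] at hu
  rw [(psiAux_hasDeriv β u).deriv]
  have h1 : Real.log β ≤ u / β := by
    rw [le_div_iff₀ hβ0]; linarith [(Set.mem_Ioi.mp hu).le, mul_comm β (Real.log β)]
  have h2 : β ≤ Real.exp (u / β) := by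
    calc β = Real.exp (Real.log β) := (Real.exp_log hβ0).symm
    _ ≤ _ := Real.exp_le_exp.2 h1
  have h3 : 1 ≤ Real.exp (u/β) / β := (one_le_div hβ0).2 h2
  have h4 : 0 < 1/β := by positivity
  linarith

lemma aux_log (a b : ℝ) : ∀ᶠ L in Filter.atTop, a * Real.log L + b ≤ L := by
  have h : (fun L : ℝ => a * Real.log L + b) =o[Filter.atTop] id :=
    (Real.isLittleO_log_id_atTop.const_mul_left a).add (Asymptotics.isLittleO_const_id_atTop b)
  filter_upwards [h.bound one_pos, Filter.eventually_ge_atTop (0:ℝ)] with L hL hL0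
  simp only [Real.norm_eq_abs, id] at hL
  calc a * Real.log L + b ≤ |a * Real.log L + b| := le_abs_self _
  _ ≤ 1 * |L| := hL
  _ = L := by rw [one_mul, abs_of_nonneg hL0]

/-- The Legendre transform `G*(y) = sup_{x ≥ 0} (x·y − G(x))`. -/
noncomputable def Fstar (G : ℝ → ℝ) (y : ℝ) : ℝ :=
  sSup {v : ℝ | ∃ x : ℝ, 0 ≤ x ∧ v = x * y - G x}

theorem critical_point_asymptotics_expexp (β : ℝ) (hβ : 1 < β) (G : ℝ → ℝ)
    (hG_mono : MonotoneOn G (Set.Ici 0))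
    (hG_nonneg : ∀ x : ℝ, 0 ≤ x → 0 ≤ G x)
    (hG_eq : ∀ z : ℝ, 1 ≤ z → G z = Real.exp (Real.exp (Real.log z / β))) :
    ∃ X₀ : ℝ, 1 < X₀ ∧ ∃ K C : ℝ, 0 < C ∧ ∀ k : ℝ, K ≤ k →
      (∃! x : ℝ, X₀ ≤ x ∧ deriv G x = k) ∧
      ∀ x : ℝ, X₀ ≤ x → deriv G x = k →
        |x - Real.log k ^ β| ≤
            C * Real.log k ^ β * (Real.log (Real.log k) / Real.log k) ∧
        Fstar G k ≤ k * x ∧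
        k * x ≤ k * Real.log k ^ β *
          (1 + C * (Real.log (Real.log k) / Real.log k)) := by
  have hβ0 : 0 < β := lt_trans one_pos hβ
  have hβ0' : β ≠ 0 := ne_of_gt hβ0
  obtain ⟨t₀, ht₀def⟩ : ∃ a : ℝ, a = max 1 (β * Real.log β) := ⟨_, rfl⟩
  have ht₀1 : 1 ≤ t₀ := by rw [ht₀def]; exact le_max_left _ _
  have ht₀β : β * Real.log β ≤ t₀ := by rw [ht₀def]; exact le_max_right _ _
  obtain ⟨X₀, hX₀def⟩ : ∃ a : ℝ, a = Real.exp t₀ := ⟨_, rfl⟩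
  have hX₀1 : 1 < X₀ := by
    rw [hX₀def, show (1:ℝ) = Real.exp 0 by rw [Real.exp_zero]]
    exact Real.exp_lt_exp.2 (by linarith)
  obtain ⟨C, hCdef⟩ : ∃ a : ℝ, a = 3 * β^2 * Real.exp β := ⟨_, rfl⟩
  have hC : 0 < C := by
    have h1 : 0 < β^2 := pow_pos hβ0 2
    rw [hCdef]
    have := Real.exp_pos β
    nlinarith
  have hSM : StrictMonoOn (psiAux β) (Set.Ici t₀) := psiAux_strictMono β hβ t₀ ht₀β
  -- eventual conditions on L
  have hev : ∀ᶠ L in Filter.atTop, 1 ≤ L ∧ 1 ≤ Real.log L ∧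
      ((β-1) * Real.log L + ((β-1) * Real.log 2 + Real.log β) ≤ L) ∧
      psiAux β t₀ ≤ L ∧ t₀ ≤ β * (Real.log 2 + Real.log L) ∧
      (3*β * Real.log L + 0 ≤ L) := by
    have h1 : ∀ᶠ L in Filter.atTop, (1:ℝ) ≤ L := Filter.eventually_ge_atTop 1
    have h2 : ∀ᶠ L in Filter.atTop, 1 ≤ Real.log L :=
      Real.tendsto_log_atTop.eventually_ge_atTop 1
    have h3 := aux_log (β-1) ((β-1) * Real.log 2 + Real.log β)
    have h4 : ∀ᶠ L in Filter.atTop, psiAux β t₀ ≤ L := Filter.eventually_ge_atTop _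
    have h5 : ∀ᶠ L in Filter.atTop, t₀ ≤ β * (Real.log 2 + Real.log L) := by
      have : Filter.Tendsto (fun L : ℝ => β * (Real.log 2 + Real.log L)) Filter.atTop Filter.atTop :=
        (Filter.tendsto_atTop_add_const_left _ (Real.log 2) Real.tendsto_log_atTop).const_mul_atTop hβ0
      exact this.eventually_ge_atTop t₀
    have h6 := aux_log (3*β) 0
    filter_upwards [h1, h2, h3, h4, h5, h6] with L a b c d e f
    exact ⟨a, b, c, d, e, f⟩
  obtain ⟨L₀, hL₀⟩ := Filter.eventually_atTop.1 hev
  refine ⟨X₀, hX₀1, Real.exp L₀, C, hC, fun k hk => ?_⟩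
  have hk0 : 0 < k := lt_of_lt_of_le (Real.exp_pos L₀) hk
  obtain ⟨L, hLdef⟩ : ∃ a : ℝ, a = Real.log k := ⟨_, rfl⟩
  have hLL₀ : L₀ ≤ L := by rw [hLdef]; exact (Real.le_log_iff_exp_le hk0).2 hk
  obtain ⟨hL1, hlogL1, hE2, hE3, hE4, hE5⟩ := hL₀ L hLL₀
  rw [add_zero] at hE5
  have hLpos : 0 < L := lt_of_lt_of_le one_pos hL1
  have hexpL : Real.exp L = k := by rw [hLdef]; exact Real.exp_log hk0
  have hlog2L : Real.log (2*L) = Real.log 2 + Real.log L :=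
    Real.log_mul two_ne_zero (ne_of_gt hLpos)
  obtain ⟨t₂, ht₂def⟩ : ∃ a : ℝ, a = β * Real.log (2*L) := ⟨_, rfl⟩
  have ht₀t₂ : t₀ ≤ t₂ := by rw [ht₂def, hlog2L]; exact hE4
  have hψt₂ : L ≤ psiAux β t₂ := by
    have hdiv : t₂ / β = Real.log (2*L) := by rw [ht₂def]; field_simp
    have hexp : Real.exp (t₂/β) = 2*L := by rw [hdiv, Real.exp_log (by linarith)]
    rw [psiAux, hexp, hdiv, ht₂def, hlog2L]
    have h1 : β * (Real.log 2 + Real.log L) = β * Real.log 2 + β * Real.log L := by ring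
    rw [h1]
    linarith
  -- key fact: deriv G x = exp (psiAux β (log x)) for x ≥ X₀
  have hkey : ∀ x : ℝ, X₀ ≤ x → deriv G x = Real.exp (psiAux β (Real.log x)) := by
    intro x hx
    exact (deriv_G_eq β hβ0 G hG_eq x (lt_of_lt_of_le hX₀1 hx)).deriv
  have hlogX₀ : ∀ x : ℝ, X₀ ≤ x → t₀ ≤ Real.log x := by
    intro x hx
    rw [hX₀def] at hx
    exact (Real.le_log_iff_exp_le (lt_of_lt_of_le (by rw [← hX₀def]; linarith) hx)).2 hx
  -- existence
  have hex : ∃ x : ℝ, X₀ ≤ x ∧ deriv G x = k := by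
    have hIcc : L ∈ Set.Icc (psiAux β t₀) (psiAux β t₂) := ⟨hE3, hψt₂⟩
    obtain ⟨u, hu, hψu⟩ := intermediate_value_Icc ht₀t₂ ((psiAux_continuous β).continuousOn) hIcc
    have hXu : X₀ ≤ Real.exp u := by rw [hX₀def]; exact Real.exp_le_exp.2 hu.1
    refine ⟨Real.exp u, hXu, ?_⟩
    rw [hkey _ hXu, Real.log_exp, hψu, hexpL]
  -- uniqueness
  have huniq : ∀ x₁ x₂ : ℝ, X₀ ≤ x₁ → X₀ ≤ x₂ → deriv G x₁ = k → deriv G x₂ = k → x₁ = x₂ := by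
    intro x₁ x₂ h1 h2 hd1 hd2
    have e1 : Real.exp (psiAux β (Real.log x₁)) = Real.exp (psiAux β (Real.log x₂)) := by
      rw [← hkey _ h1, ← hkey _ h2, hd1, hd2]
    have e2 : psiAux β (Real.log x₁) = psiAux β (Real.log x₂) := Real.exp_injective e1
    have e3 : Real.log x₁ = Real.log x₂ :=
      hSM.injOn (hlogX₀ _ h1) (hlogX₀ _ h2) e2
    have p1 : 0 < x₁ := lt_trans one_pos (lt_of_lt_of_le hX₀1 h1)
    have p2 : 0 < x₂ := lt_trans one_pos (lt_of_lt_of_le hX₀1 h2)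
    rw [← Real.exp_log p1, ← Real.exp_log p2, e3]
  refine ⟨⟨hex.choose, hex.choose_spec,
    fun y hy => huniq y hex.choose hy.1 hex.choose_spec.1 hy.2 hex.choose_spec.2⟩, ?_⟩
  -- main bounds
  intro x hxX₀ hdx
  rw [← hLdef]
  have hx1 : 1 < x := lt_of_lt_of_le hX₀1 hxX₀
  have hxpos : 0 < x := lt_trans one_pos hx1
  obtain ⟨t, htdef⟩ : ∃ a : ℝ, a = Real.log x := ⟨_, rfl⟩
  have htt₀ : t₀ ≤ t := by rw [htdef]; exact hlogX₀ x hxX₀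
  have hψt : psiAux β t = L := by
    have h := hkey x hxX₀
    rw [hdx, ← hexpL] at h
    rw [htdef]
    exact Real.exp_injective h.symm
  have htt₂ : t ≤ t₂ := by
    by_contra h
    push_neg at h
    have h2 := hSM ht₀t₂ htt₀ h
    rw [hψt] at h2
    exact absurd hψt₂ (not_le.2 h2)
  obtain ⟨δ, hδdef⟩ : ∃ a : ℝ, a = (1 - 1/β)*t + Real.log β := ⟨_, rfl⟩
  have hlogβpos : 0 < Real.log β := Real.log_pos hβ
  have heq1 : (1 - 1/β)*t = t - t/β := by field_simp
  have htpos : 0 < t := lt_of_lt_of_le one_pos (le_trans ht₀1 htt₀)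
  have htβpos : 0 < t/β := div_pos htpos hβ0
  have hδpos : 0 < δ := by rw [hδdef, heq1]; linarith [div_lt_self htpos hβ]
  have hexp_t : Real.exp (t/β) = L + δ := by
    have h := hψt
    rw [psiAux] at h
    rw [hδdef, heq1]
    linarith
  have hlog2le1 : Real.log 2 ≤ 1 := by
    have := Real.log_le_sub_one_of_pos (two_pos (α := ℝ))
    linarith
  have hβlogL : β ≤ β * Real.log L := by
    have := mul_le_mul_of_nonneg_left hlogL1 hβ0.le
    linarith [this]
  have hδle : δ ≤ 3*β*Real.log L := by
    have ht2 : t ≤ β * Real.log 2 + β * Real.log L := by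
      have h := htt₂
      rw [ht₂def, hlog2L] at h
      linarith [h, mul_add β (Real.log 2) (Real.log L)]
    have hb2 : β * Real.log 2 ≤ β := by
      have := mul_le_mul_of_nonneg_left hlog2le1 hβ0.le
      linarith [this]
    have hlogβle : Real.log β ≤ β := by
      have := Real.log_le_sub_one_of_pos hβ0
      linarith
    rw [hδdef, heq1]
    linarith
  have hδL : δ ≤ L := le_trans hδle hE5
  have hx_eq : x = (L + δ)^β := by
    rw [← hexp_t, ← Real.exp_mul, div_mul_cancel₀ t hβ0', htdef]
    exact (Real.exp_log hxpos).symm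
  have hLβpos : 0 < L^β := Real.rpow_pos_of_pos hLpos β
  obtain ⟨s, hsdef⟩ : ∃ a : ℝ, a = δ/L*β := ⟨_, rfl⟩
  have hδLnn : 0 ≤ δ/L := (div_nonneg hδpos.le hLpos.le)
  have hs0 : 0 ≤ s := by rw [hsdef]; exact mul_nonneg hδLnn hβ0.le
  have hsβ : s ≤ β := by
    have h1 : δ/L ≤ 1 := (div_le_one hLpos).2 hδL
    have h2 := mul_le_mul_of_nonneg_right h1 hβ0.le
    rw [hsdef]
    linarith [h2]
  have hub1 : (1 + δ/L)^β ≤ Real.exp s := by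
    calc (1 + δ/L)^β ≤ (Real.exp (δ/L))^β := by
          apply Real.rpow_le_rpow (by linarith) _ hβ0.le
          linarith [Real.add_one_le_exp (δ/L)]
    _ = Real.exp s := by rw [← Real.exp_mul, hsdef]
  have hub2 : Real.exp s ≤ 1 + s * Real.exp β := by
    have h1 : -s + 1 ≤ Real.exp (-s) := Real.add_one_le_exp (-s)
    rw [Real.exp_neg] at h1
    have h1' := mul_le_mul_of_nonneg_right h1 (Real.exp_pos s).le
    rw [inv_mul_cancel₀ (ne_of_gt (Real.exp_pos s))] at h1'
    have h2 : (-s + 1) * Real.exp s = Real.exp s - s * Real.exp s := by ring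
    have h3 : s * Real.exp s ≤ s * Real.exp β :=
      mul_le_mul_of_nonneg_left (Real.exp_le_exp.2 hsβ) hs0
    linarith
  have hsplit : (L + δ)^β = L^β * (1 + δ/L)^β := by
    rw [← Real.mul_rpow hLpos.le (by linarith)]
    congr 1
    field_simp
  have hxub : x - L^β ≤ C * L^β * (Real.log L / L) := by
    have h1 : x ≤ L^β * (1 + s * Real.exp β) := by
      rw [hx_eq, hsplit]
      exact mul_le_mul_of_nonneg_left (hub1.trans hub2) hLβpos.le
    have h2a : δ/L ≤ 3*β*Real.log L/L := by
      exact (div_le_div_iff_of_pos_right hLpos).2 hδle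
    have h2 : s ≤ 3*β*Real.log L/L*β := by
      rw [hsdef]
      exact mul_le_mul_of_nonneg_right h2a hβ0.le
    have h4 : L^β * (s * Real.exp β) ≤ L^β * ((3*β*Real.log L/L*β) * Real.exp β) :=
      mul_le_mul_of_nonneg_left
        (mul_le_mul_of_nonneg_right h2 (Real.exp_pos β).le) hLβpos.le
    have h5 : L^β * ((3*β*Real.log L/L*β) * Real.exp β) = C * L^β * (Real.log L / L) := by
      rw [hCdef]; ring
    have h6 : L^β * (1 + s * Real.exp β) = L^β + L^β * (s * Real.exp β) := by ring
    linarith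
  have hxlb : L^β ≤ x := by
    rw [hx_eq]
    exact Real.rpow_le_rpow hLpos.le (by linarith) hβ0.le
  have hlogLL : 0 ≤ Real.log L / L := div_nonneg (by linarith) hLpos.le
  have habs : |x - L^β| ≤ C * L^β * (Real.log L / L) := by
    rw [abs_of_nonneg (by linarith)]
    exact hxub
  refine ⟨habs, ?_, ?_⟩
  · -- Fstar bound
    have hmono : ∀ y : ℝ, x < y → k*(y - x) ≤ G y - G x := by
      intro y hxy
      have hcont : ContinuousOn G (Set.Icc x y) := by
        intro u hu
        exact ((deriv_G_eq β hβ0 G hG_eq u (lt_of_lt_of_le hx1 hu.1)).continuousAt).continuousWithinAt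
      have hderiv : ∀ u ∈ Set.Ioo x y, HasDerivAt G (Real.exp (psiAux β (Real.log u))) u :=
        fun u hu => deriv_G_eq β hβ0 G hG_eq u (lt_trans hx1 hu.1)
      obtain ⟨ξ, hξ, hslope⟩ := exists_hasDerivAt_eq_slope G _ hxy hcont hderiv
      have hξx : t ≤ Real.log ξ := by
        rw [htdef]
        exact Real.log_le_log hxpos hξ.1.le
      have hklec : k ≤ Real.exp (psiAux β (Real.log ξ)) := by
        rw [← hexpL, ← hψt]
        exact Real.exp_le_exp.2 (hSM.monotoneOn htt₀ (le_trans htt₀ hξx) hξx)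
      rw [hslope] at hklec
      have hyx : 0 < y - x := by linarith
      rw [le_div_iff₀ hyx] at hklec
      linarith
    rw [Fstar]
    refine Real.sSup_le ?_ (mul_nonneg hk0.le hxpos.le)
    rintro v ⟨y, hy0, rfl⟩
    rcases le_or_gt y x with h | h
    · have h1 := hG_nonneg y hy0
      have h2 := mul_le_mul_of_nonneg_right h hk0.le
      linarith
    · have h1 := hmono y h
      have h2 := hG_nonneg x hxpos.le
      linarith
  · have h1 : x ≤ L^β * (1 + C*(Real.log L/L)) := by
      have h2 : L^β * (1 + C*(Real.log L/L)) = L^β + C * L^β * (Real.log L / L) := by ring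
      linarith
    calc k*x ≤ k*(L^β*(1 + C*(Real.log L/L))) := mul_le_mul_of_nonneg_left h1 hk0.le
    _ = k * L^β * (1 + C*(Real.log L/L)) := by ring
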